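/- The greedy matrix A(n) is periodic: there exist integers pp ≥ 0 and p ≥ 1 with pp + p ≤ 2^(σ²), where σ = 2n³ - n(n-3), such that a_{i+p, j+p} = a_{ij} for all i > pp and all j ≥ 1. -/

import Mathlib

/-- Number of ones in row `k` strictly to the left of column `l` (columns `1..l-1`). -/
def rowOnes (a : ℕ → ℕ → Bool) (k l : ℕ) : ℕ :=
  ((Finset.Ico 1 l).filter (fun j => a k j = true)).card

/-- Number of ones in column `l` strictly above row `k` (rows `1..k-1`). -/
def colOnes (a : ℕ → ℕ → Bool) (k l : ℕ) : ℕ :=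
  ((Finset.Ico 1 k).filter (fun i => a i l = true)).card

/-- The greedy (first-choice) matrix `A(n)`: entries are placed row by row, left to
right; a one is placed at `(k,l)` unless the row already has `n+1` ones to the left,
the column already has `n+1` ones above, or a rectangle of ones would be created. -/
def IsGreedy (n : ℕ) (a : ℕ → ℕ → Bool) : Prop :=
  (∀ i j, i = 0 ∨ j = 0 → a i j = false) ∧
  ∀ k l, 1 ≤ k → 1 ≤ l →
    (a k l = true ↔
      rowOnes a k l < n + 1 ∧ colOnes a k l < n + 1 ∧
      ¬ ∃ i j, 1 ≤ i ∧ i < k ∧ 1 ≤ j ∧ j < l ∧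
        a i j = true ∧ a i l = true ∧ a k j = true)

namespace Stmt8aux

variable {n : ℕ} {a : ℕ → ℕ → Bool}

lemma pos_of_true (h : IsGreedy n a) {i j : ℕ} (ht : a i j = true) : 1 ≤ i ∧ 1 ≤ j := by
  rcases Nat.eq_zero_or_pos i with hi | hi
  · rw [h.1 i j (Or.inl hi)] at ht; exact absurd ht (by simp)
  rcases Nat.eq_zero_or_pos j with hj | hj
  · rw [h.1 i j (Or.inr hj)] at ht; exact absurd ht (by simp)
  exact ⟨hi, hj⟩

lemma rowOnes_mono (a : ℕ → ℕ → Bool) (k : ℕ) {l l' : ℕ} (h : l ≤ l') :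
    rowOnes a k l ≤ rowOnes a k l' :=
  Finset.card_le_card (Finset.filter_subset_filter _ (Finset.Ico_subset_Ico le_rfl h))

lemma rowOnes_le (h : IsGreedy n a) (k l : ℕ) : rowOnes a k l ≤ n + 1 := by
  induction l with
  | zero => simp [rowOnes]
  | succ l IH =>
    rcases Nat.eq_zero_or_pos l with rfl | hl
    · simp [rowOnes]
    have heq : rowOnes a k (l + 1) = rowOnes a k l + if a k l = true then 1 else 0 := by
      unfold rowOnes
      rw [Finset.card_filter, Finset.card_filter, Finset.sum_Ico_succ_top hl]
    rcases Bool.eq_false_or_eq_true (a k l) with htr | hf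
    case inr => rw [heq, hf]; simpa using IH
    · obtain ⟨hk1, hl1⟩ := pos_of_true h htr
      have := ((h.2 k l hk1 hl1).mp htr).1
      rw [heq, htr]; simp; omega

lemma transpose_greedy (h : IsGreedy n a) : IsGreedy n (fun i j => a j i) := by
  constructor
  · intro i j hij
    exact h.1 j i (hij.symm.imp id id)
  · intro k l hk hl
    have hro : rowOnes (fun i j => a j i) k l = colOnes a l k := rfl
    have hco : colOnes (fun i j => a j i) k l = rowOnes a l k := rfl
    rw [hro, hco]
    have base := h.2 l k hl hk
    constructor
    · intro ht
      have := base.mp ht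
      refine ⟨this.2.1, this.1, ?_⟩
      rintro ⟨i, j, hi1, hik, hj1, hjl, h1, h2, h3⟩
      exact this.2.2 ⟨j, i, hj1, hjl, hi1, hik, h1, h3, h2⟩
    · rintro ⟨h1, h2, h3⟩
      refine base.mpr ⟨h2, h1, ?_⟩
      rintro ⟨i, j, hi1, hil, hj1, hjk, g1, g2, g3⟩
      exact h3 ⟨j, i, hj1, hjk, hi1, hil, g1, g3, g2⟩

lemma colOnes_le (h : IsGreedy n a) (k l : ℕ) : colOnes a k l ≤ n + 1 :=
  rowOnes_le (transpose_greedy h) l k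


lemma bandwidth (h : IsGreedy n a) {k L : ℕ} (hL : a k L = true) : L ≤ k + (n ^ 3 + n) := by
  classical
  by_contra hgt
  push_neg at hgt
  obtain ⟨hk1, hL1⟩ := pos_of_true h hL
  set M := k + (n ^ 3 + n) with hM
  have hML : M + 1 ≤ L := hgt
  have hrowL : rowOnes a k L < n + 1 := ((h.2 k L hk1 hL1).mp hL).1
  set O : Finset ℕ := (Finset.Ico 1 (M + 1)).filter (fun l => a k l = true) with hO
  set F : Finset ℕ := (Finset.Ico 1 (M + 1)).filter (fun l => n + 1 ≤ colOnes a k l) with hF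
  set RB : Finset ℕ := (Finset.Ico 1 (M + 1)).filter
      (fun l => ∃ i j, 1 ≤ i ∧ i < k ∧ 1 ≤ j ∧ j < l ∧
        a i j = true ∧ a i l = true ∧ a k j = true) with hRB
  have hcov : Finset.Ico 1 (M + 1) ⊆ O ∪ F ∪ RB := by
    intro l hlmem
    have hl1 : 1 ≤ l := (Finset.mem_Ico.mp hlmem).1
    have hlM : l < M + 1 := (Finset.mem_Ico.mp hlmem).2
    rcases Bool.eq_false_or_eq_true (a k l) with htr | hfa
    · exact Finset.mem_union_left _ (Finset.mem_union_left _ (Finset.mem_filter.mpr ⟨hlmem, htr⟩))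
    · have hiff := h.2 k l hk1 hl1
      have hrl : rowOnes a k l < n + 1 :=
        lt_of_le_of_lt (rowOnes_mono a k (show l ≤ L by omega)) hrowL
      by_cases hcl : colOnes a k l < n + 1
      · refine Finset.mem_union_right _ (Finset.mem_filter.mpr ⟨hlmem, ?_⟩)
        by_contra hnr
        have : a k l = true := hiff.mpr ⟨hrl, hcl, hnr⟩
        rw [hfa] at this; exact absurd this (by simp)
      · exact Finset.mem_union_left _ (Finset.mem_union_right _
          (Finset.mem_filter.mpr ⟨hlmem, by omega⟩))
  have hOcard : O.card ≤ n := by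
    have h1 : O.card = rowOnes a k (M + 1) := rfl
    have h2 : rowOnes a k (M + 1) ≤ rowOnes a k L := rowOnes_mono a k hML
    omega
  have hFcard : F.card ≤ k - 1 := by
    have hsum : ∑ l ∈ Finset.Ico 1 (M + 1), colOnes a k l
        = ∑ i ∈ Finset.Ico 1 k, rowOnes a i (M + 1) := by
      unfold colOnes rowOnes
      simp only [Finset.card_filter]
      exact Finset.sum_comm
    have h1 : F.card * (n + 1) ≤ ∑ l ∈ F, colOnes a k l := by
      calc F.card * (n + 1) = ∑ _l ∈ F, (n + 1) := by rw [Finset.sum_const, smul_eq_mul]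
      _ ≤ ∑ l ∈ F, colOnes a k l :=
          Finset.sum_le_sum (fun l hl => (Finset.mem_filter.mp hl).2)
    have h2 : ∑ l ∈ F, colOnes a k l ≤ ∑ l ∈ Finset.Ico 1 (M + 1), colOnes a k l :=
      Finset.sum_le_sum_of_subset (Finset.filter_subset _ _)
    have h3 : ∑ i ∈ Finset.Ico 1 k, rowOnes a i (M + 1) ≤ (k - 1) * (n + 1) := by
      calc ∑ i ∈ Finset.Ico 1 k, rowOnes a i (M + 1)
          ≤ ∑ _i ∈ Finset.Ico 1 k, (n + 1) :=
            Finset.sum_le_sum (fun i _ => rowOnes_le h i (M + 1))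
      _ = (k - 1) * (n + 1) := by rw [Finset.sum_const, smul_eq_mul, Nat.card_Ico]
    have h4 : F.card * (n + 1) ≤ (k - 1) * (n + 1) := by omega
    exact Nat.le_of_mul_le_mul_right h4 (by omega)
  have hRBcard : RB.card ≤ n * n * n := by
    set g : ℕ → Finset ℕ := fun j =>
        ((Finset.Ico 1 k).filter (fun i => a i j = true)).biUnion (fun i =>
          (Finset.Ico 1 (M + 1)).filter (fun l => a i l = true ∧ j < l)) with hg
    have hsub : RB ⊆ O.biUnion g := by
      intro l hl
      obtain ⟨hlmem, i, j, hi1, hik, hj1, hjl, g1, g2, g3⟩ := Finset.mem_filter.mp hl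
      have hlM : l < M + 1 := (Finset.mem_Ico.mp hlmem).2
      refine Finset.mem_biUnion.mpr ⟨j, Finset.mem_filter.mpr ⟨Finset.mem_Ico.mpr ⟨hj1, by omega⟩, g3⟩, ?_⟩
      refine Finset.mem_biUnion.mpr ⟨i, Finset.mem_filter.mpr ⟨Finset.mem_Ico.mpr ⟨hi1, hik⟩, g1⟩, ?_⟩
      exact Finset.mem_filter.mpr ⟨hlmem, g2, hjl⟩
    have hbnd : ∀ j ∈ O, (g j).card ≤ n * n := by
      intro j hj
      obtain ⟨hjmem, hakj⟩ := Finset.mem_filter.mp hj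
      have hj1 : 1 ≤ j := (Finset.mem_Ico.mp hjmem).1
      have hjM : j < M + 1 := (Finset.mem_Ico.mp hjmem).2
      have hCj : ((Finset.Ico 1 k).filter (fun i => a i j = true)).card ≤ n := by
        have h5 : colOnes a k j < n + 1 := ((h.2 k j hk1 hj1).mp hakj).2.1
        have he : ((Finset.Ico 1 k).filter (fun i => a i j = true)).card = colOnes a k j := rfl
        omega
      calc (g j).card ≤ ∑ i ∈ (Finset.Ico 1 k).filter (fun i => a i j = true),
            ((Finset.Ico 1 (M + 1)).filter (fun l => a i l = true ∧ j < l)).card :=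
          Finset.card_biUnion_le
      _ ≤ ∑ _i ∈ (Finset.Ico 1 k).filter (fun i => a i j = true), n := by
          apply Finset.sum_le_sum
          intro i hi
          obtain ⟨himem, haij⟩ := Finset.mem_filter.mp hi
          have hTsub : (Finset.Ico 1 (M + 1)).filter (fun l => a i l = true ∧ j < l)
              ⊆ ((Finset.Ico 1 (M + 1)).filter (fun l => a i l = true)).erase j := by
            intro l hl
            obtain ⟨hlm, hal, hjl⟩ := Finset.mem_filter.mp hl
            exact Finset.mem_erase.mpr ⟨by omega, Finset.mem_filter.mpr ⟨hlm, hal⟩⟩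
          have hjT : j ∈ (Finset.Ico 1 (M + 1)).filter (fun l => a i l = true) :=
            Finset.mem_filter.mpr ⟨Finset.mem_Ico.mpr ⟨hj1, hjM⟩, haij⟩
          have hT : ((Finset.Ico 1 (M + 1)).filter (fun l => a i l = true)).card ≤ n + 1 :=
            rowOnes_le h i (M + 1)
          calc ((Finset.Ico 1 (M + 1)).filter (fun l => a i l = true ∧ j < l)).card
              ≤ (((Finset.Ico 1 (M + 1)).filter (fun l => a i l = true)).erase j).card :=
              Finset.card_le_card hTsub
          _ = ((Finset.Ico 1 (M + 1)).filter (fun l => a i l = true)).card - 1 :=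
              Finset.card_erase_of_mem hjT
          _ ≤ n := by omega
      _ ≤ n * n := by
          rw [Finset.sum_const, smul_eq_mul]
          exact Nat.mul_le_mul_right n hCj
    calc RB.card ≤ (O.biUnion g).card := Finset.card_le_card hsub
    _ ≤ ∑ j ∈ O, (g j).card := Finset.card_biUnion_le
    _ ≤ ∑ _j ∈ O, n * n := Finset.sum_le_sum hbnd
    _ = O.card * (n * n) := by rw [Finset.sum_const, smul_eq_mul]
    _ ≤ n * (n * n) := Nat.mul_le_mul_right _ hOcard
    _ = n * n * n := by ring
  have htot : (Finset.Ico 1 (M + 1)).card ≤ O.card + F.card + RB.card := by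
    calc (Finset.Ico 1 (M + 1)).card ≤ (O ∪ F ∪ RB).card := Finset.card_le_card hcov
    _ ≤ (O ∪ F).card + RB.card := Finset.card_union_le _ _
    _ ≤ O.card + F.card + RB.card := by
        have := Finset.card_union_le O F
        omega
  have hIco := Nat.card_Ico 1 (M + 1)
  have hn3 : n ^ 3 = n * n * n := by ring
  omega

lemma band_left (h : IsGreedy n a) {k L : ℕ} (hL : a k L = true) : k ≤ L + (n ^ 3 + n) :=
  bandwidth (transpose_greedy h) (show (fun i j => a j i) L k = true from hL)

lemma band_false (h : IsGreedy n a) (x y : ℕ)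
    (hxy : x + (n ^ 3 + n) < y ∨ y + (n ^ 3 + n) < x) : a x y = false := by
  rcases Bool.eq_false_or_eq_true (a x y) with htr | hfa
  · have h1 := bandwidth h htr
    have h2 := band_left h htr
    omega
  · exact hfa

lemma bool_eq_of_iff {x y : Bool} (hxy : x = true ↔ y = true) : x = y := by
  cases x <;> cases y <;> simp_all

lemma propagate (h : IsGreedy n a) (m p : ℕ) (hm : n ^ 3 + n ≤ m) (hp : 1 ≤ p)
    (hS : ∀ u v : ℕ, u ≤ v → v < 2 * (n ^ 3 + n) →
      a (m - u) ((m + v + 1) - (u + (n ^ 3 + n)))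
        = a ((m + p) - u) (((m + p) + v + 1) - (u + (n ^ 3 + n)))) :
    ∀ k, m < k → ∀ j, 1 ≤ j → a (k + p) (j + p) = a k j := by
  set D := n ^ 3 + n with hD
  have helper : ∀ i j : ℕ, i ≤ m → i + 1 ≤ j + D → j ≤ i + D → m + 1 ≤ j + D →
      a i j = a (i + p) (j + p) := by
    intro i j h1 h2 h3 h4
    have key := hS (m - i) ((j + D) - (i + 1)) (by omega) (by omega)
    have e1 : m - (m - i) = i := by omega
    have e2 : (m + ((j + D) - (i + 1)) + 1) - ((m - i) + D) = j := by omega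
    have e3 : (m + p) - (m - i) = i + p := by omega
    have e4 : ((m + p) + ((j + D) - (i + 1)) + 1) - ((m - i) + D) = j + p := by omega
    rw [e1, e2, e3, e4] at key
    exact key
  have helper2 : ∀ i' j' : ℕ, i' ≤ p → i' + 1 ≤ j' + D → j' ≤ i' + D → (m + p) + 1 ≤ j' + D →
      a i' j' = false := by
    intro i' j' h1 h2 h3 h4
    have key := hS ((m + p) - i') ((j' + D) - (i' + 1)) (by omega) (by omega)
    have e1 : m - ((m + p) - i') = 0 := by omega
    have e3 : (m + p) - ((m + p) - i') = i' := by omega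
    have e4 : ((m + p) + ((j' + D) - (i' + 1)) + 1) - (((m + p) - i') + D) = j' := by omega
    rw [e1, e3, e4] at key
    rw [← key]
    exact h.1 0 _ (Or.inl rfl)
  intro k
  induction k using Nat.strong_induction_on with
  | _ k IHk =>
    intro hmk j
    induction j using Nat.strong_induction_on with
    | _ j IHj =>
      intro hj1
      have hk1 : 1 ≤ k := by omega
      by_cases hb1 : k ≤ j + D
      case neg =>
        rw [band_false h k j (by omega), band_false h (k + p) (j + p) (by omega)]
      by_cases hb2 : j ≤ k + D
      case neg =>
        rw [band_false h k j (by omega), band_false h (k + p) (j + p) (by omega)]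
      -- main case: in band
      have trans : ∀ i j₀ : ℕ, 1 ≤ i → i < k → 1 ≤ j₀ → k ≤ j₀ + D →
          a (i + p) (j₀ + p) = a i j₀ := by
        intro i j₀ hi1 hik hj₀1 hkj₀
        by_cases him : i ≤ m
        · by_cases hbb : j₀ ≤ i + D
          · exact (helper i j₀ him (by omega) hbb (by omega)).symm
          · rw [band_false h i j₀ (by omega), band_false h (i + p) (j₀ + p) (by omega)]
        · exact IHk i hik (by omega) j₀ hj₀1
      have e_row : rowOnes a (k + p) (j + p) = rowOnes a k j := by
        unfold rowOnes
        have himg : (Finset.Ico 1 (j + p)).filter (fun t => a (k + p) t = true)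
            = Finset.image (· + p) ((Finset.Ico 1 j).filter (fun t => a k t = true)) := by
          ext t'
          simp only [Finset.mem_filter, Finset.mem_image, Finset.mem_Ico]
          constructor
          · rintro ⟨⟨ht1, ht2⟩, hat⟩
            have htp : p < t' := by
              by_contra hle
              push_neg at hle
              rw [band_false h (k + p) t' (by omega)] at hat
              exact absurd hat (by simp)
            refine ⟨t' - p, ⟨⟨by omega, by omega⟩, ?_⟩, by omega⟩
            have := IHj (t' - p) (by omega) (by omega)
            rw [show t' - p + p = t' from by omega] at this
            rw [← this]; exact hat
          · rintro ⟨t, ⟨⟨ht1, ht2⟩, hat⟩, rfl⟩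
            refine ⟨⟨by omega, by omega⟩, ?_⟩
            rw [IHj t ht2 ht1]; exact hat
        rw [himg, Finset.card_image_of_injective _ (add_left_injective p)]
      have e_col : colOnes a (k + p) (j + p) = colOnes a k j := by
        unfold colOnes
        have himg : (Finset.Ico 1 (k + p)).filter (fun i => a i (j + p) = true)
            = Finset.image (· + p) ((Finset.Ico 1 k).filter (fun i => a i j = true)) := by
          ext i'
          simp only [Finset.mem_filter, Finset.mem_image, Finset.mem_Ico]
          constructor
          · rintro ⟨⟨hi1, hi2⟩, hai⟩
            have hip : p < i' := by
              by_contra hle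
              push_neg at hle
              by_cases hband : i' + D < j + p
              · rw [band_false h i' (j + p) (by omega)] at hai
                exact absurd hai (by simp)
              · rw [helper2 i' (j + p) hle (by omega) (by omega) (by omega)] at hai
                exact absurd hai (by simp)
            refine ⟨i' - p, ⟨⟨by omega, by omega⟩, ?_⟩, by omega⟩
            have := trans (i' - p) j (by omega) (by omega) hj1 hb1
            rw [show i' - p + p = i' from by omega] at this
            rw [← this]; exact hai
          · rintro ⟨i, ⟨⟨hi1, hi2⟩, hai⟩, rfl⟩
            refine ⟨⟨by omega, by omega⟩, ?_⟩
            rw [trans i j hi1 hi2 hj1 hb1]; exact hai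
        rw [himg, Finset.card_image_of_injective _ (add_left_injective p)]
      have e_rect : (∃ i t, 1 ≤ i ∧ i < k + p ∧ 1 ≤ t ∧ t < j + p ∧
            a i t = true ∧ a i (j + p) = true ∧ a (k + p) t = true)
          ↔ (∃ i t, 1 ≤ i ∧ i < k ∧ 1 ≤ t ∧ t < j ∧
            a i t = true ∧ a i j = true ∧ a k t = true) := by
        constructor
        · rintro ⟨i', t', hi1, hik', ht1, htj', g1, g2, g3⟩
          have hip : p < i' := by
            by_contra hle
            push_neg at hle
            by_cases hband : i' + D < j + p
            · rw [band_false h i' (j + p) (by omega)] at g2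
              exact absurd g2 (by simp)
            · rw [helper2 i' (j + p) hle (by omega) (by omega) (by omega)] at g2
              exact absurd g2 (by simp)
          have htp : p < t' := by
            by_contra hle
            push_neg at hle
            rw [band_false h (k + p) t' (by omega)] at g3
            exact absurd g3 (by simp)
          have hkt : k + p ≤ t' + D := band_left h g3
          refine ⟨i' - p, t' - p, by omega, by omega, by omega, by omega, ?_, ?_, ?_⟩
          · have := trans (i' - p) (t' - p) (by omega) (by omega) (by omega) (by omega)
            rw [show i' - p + p = i' from by omega, show t' - p + p = t' from by omega] at this
            rw [← this]; exact g1
          · have := trans (i' - p) j (by omega) (by omega) hj1 hb1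
            rw [show i' - p + p = i' from by omega] at this
            rw [← this]; exact g2
          · have := IHj (t' - p) (by omega) (by omega)
            rw [show t' - p + p = t' from by omega] at this
            rw [← this]; exact g3
        · rintro ⟨i, t, hi1, hik, ht1, htj, g1, g2, g3⟩
          have hkt : k ≤ t + D := band_left h g3
          refine ⟨i + p, t + p, by omega, by omega, by omega, by omega, ?_, ?_, ?_⟩
          · rw [trans i t hi1 hik ht1 hkt]; exact g1
          · rw [trans i j hi1 hik hj1 hb1]; exact g2
          · rw [IHj t htj ht1]; exact g3
      apply bool_eq_of_iff
      rw [h.2 (k + p) (j + p) (by omega) (by omega), h.2 k j hk1 hj1, e_row, e_col]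
      constructor
      · rintro ⟨c1, c2, c3⟩
        exact ⟨c1, c2, fun hex => c3 (e_rect.mpr hex)⟩
      · rintro ⟨c1, c2, c3⟩
        exact ⟨c1, c2, fun hex => c3 (e_rect.mp hex)⟩

lemma cell_card (q : ℕ) : Fintype.card {c : Fin q × Fin q // c.1 ≤ c.2} = (q + 1) * q / 2 := by
  rw [← Fintype.card_congr (Sym2.sortEquiv (α := Fin q)), Sym2.card, Fintype.card_fin,
    Nat.choose_two_right]
  simp

lemma numeric1 (n : ℕ) (hn : 1 ≤ n) :
    2 * (n ^ 3 + n) ^ 2 + (n ^ 3 + n) + 1 ≤ (2 * n ^ 3 + 3 * n - n ^ 2) ^ 2 := by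
  have hle : n ^ 2 ≤ 2 * n ^ 3 + 3 * n := by nlinarith
  have key : ((2 * n ^ 3 + 3 * n - n ^ 2 : ℕ) : ℤ) = 2 * (n : ℤ) ^ 3 + 3 * n - n ^ 2 := by
    rw [Nat.cast_sub hle]; push_cast; ring
  have hn1 : (1 : ℤ) ≤ (n : ℤ) := by exact_mod_cast hn
  zify
  rw [key]
  nlinarith [hn1, mul_nonneg (mul_nonneg (pow_nonneg (by linarith : (0:ℤ) ≤ (n:ℤ)) 4)
      (by linarith : (0:ℤ) ≤ (n:ℤ) - 1)) (by linarith : (0:ℤ) ≤ (n:ℤ) - 1),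
    mul_nonneg (pow_nonneg (by linarith : (0:ℤ) ≤ (n:ℤ)) 3) (by linarith : (0:ℤ) ≤ (n:ℤ) - 1),
    sq_nonneg ((n:ℤ) - 1), mul_pos (by positivity : (0:ℤ) < (n:ℤ)^2) (by linarith : (0:ℤ) < 7*(n:ℤ) - 1)]

lemma numeric2 (n : ℕ) :
    (n ^ 3 + n) + 2 ^ (2 * (n ^ 3 + n) ^ 2 + (n ^ 3 + n)) ≤ 2 ^ ((2 * n ^ 3 + 3 * n - n ^ 2) ^ 2) := by
  rcases Nat.eq_zero_or_pos n with rfl | hn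
  · norm_num
  have h1 := numeric1 n hn
  set D := n ^ 3 + n with hD
  set E := 2 * D ^ 2 + D with hE
  have hDE : D ≤ E := Nat.le_add_left D (2 * D ^ 2)
  have hD2 : D ≤ 2 ^ E := le_trans hDE (Nat.le_of_lt (Nat.lt_two_pow_self (n := E)))
  calc D + 2 ^ E ≤ 2 ^ E + 2 ^ E := by omega
  _ = 2 ^ (E + 1) := by rw [pow_succ]; ring
  _ ≤ 2 ^ ((2 * n ^ 3 + 3 * n - n ^ 2) ^ 2) := Nat.pow_le_pow_right (by norm_num) (by omega)

lemma exponent_eq (n : ℕ) :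
    (((2 * (n : ℤ) ^ 3 - (n : ℤ) * ((n : ℤ) - 3)) ^ 2).toNat)
      = (2 * n ^ 3 + 3 * n - n ^ 2) ^ 2 := by
  have hle : n ^ 2 ≤ 2 * n ^ 3 + 3 * n := by nlinarith
  have h1 : (2 * (n : ℤ) ^ 3 - (n : ℤ) * ((n : ℤ) - 3)) = ((2 * n ^ 3 + 3 * n - n ^ 2 : ℕ) : ℤ) := by
    rw [Nat.cast_sub hle]
    push_cast
    ring
  rw [h1, ← Nat.cast_pow, Int.toNat_natCast]

end Stmt8aux

/-- Theorem 3.3: the greedy matrix `A(n)` is periodic, with preperiod `pp` and period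
`p` satisfying `pp + p ≤ 2 ^ (σ^2)` where `σ = 2n^3 - n(n-3)`. -/
theorem stmt8 (n : ℕ) (a : ℕ → ℕ → Bool) (h : IsGreedy n a) :
    ∃ pp p : ℕ, 1 ≤ p ∧
      ((pp : ℤ) + (p : ℤ) ≤ 2 ^ (((2 * (n : ℤ) ^ 3 - (n : ℤ) * ((n : ℤ) - 3)) ^ 2).toNat)) ∧
      ∀ i j : ℕ, pp < i → 1 ≤ j → a (i + p) (j + p) = a i j := by
  classical
  set D := n ^ 3 + n with hD
  set q := 2 * D with hq
  set Θ : ℕ → ({c : Fin q × Fin q // c.1 ≤ c.2} → Bool) := fun m c =>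
    a (m - (c.1.1 : ℕ)) ((m + (c.1.2 : ℕ) + 1) - ((c.1.1 : ℕ) + D)) with hΘ
  set E := 2 * D ^ 2 + D with hE
  have hcard : Fintype.card {c : Fin q × Fin q // c.1 ≤ c.2} = E := by
    rw [Stmt8aux.cell_card]
    have e1 : (q + 1) * q = 2 * E := by rw [hq, hE]; ring
    rw [e1, Nat.mul_div_cancel_left _ (by norm_num)]
  have hmaps : ∀ x ∈ Finset.Icc D (D + 2 ^ E), Θ x ∈
      (Finset.univ : Finset ({c : Fin q × Fin q // c.1 ≤ c.2} → Bool)) :=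
    fun x _ => Finset.mem_univ _
  have hlt : (Finset.univ : Finset ({c : Fin q × Fin q // c.1 ≤ c.2} → Bool)).card
      < (Finset.Icc D (D + 2 ^ E)).card := by
    rw [Finset.card_univ, Fintype.card_fun, hcard, Nat.card_Icc, Fintype.card_bool]
    omega
  obtain ⟨x, hx, y, hy, hxy, hΘeq⟩ :=
    Finset.exists_ne_map_eq_of_card_lt_of_maps_to hlt hmaps
  wlog hlt2 : x < y generalizing x y
  · exact this y hy x hx (Ne.symm hxy) hΘeq.symm (by omega)
  have hxmem := Finset.mem_Icc.mp hx
  have hymem := Finset.mem_Icc.mp hy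
  refine ⟨x, y - x, by omega, ?_, ?_⟩
  · rw [Stmt8aux.exponent_eq n]
    have h2 := Stmt8aux.numeric2 n
    rw [← hD, ← hE] at h2
    have hxy2 : (x : ℤ) + ((y - x : ℕ) : ℤ) = ((y : ℕ) : ℤ) := by omega
    rw [hxy2]
    have h3 : y ≤ 2 ^ ((2 * n ^ 3 + 3 * n - n ^ 2) ^ 2) := by omega
    calc ((y : ℕ) : ℤ) ≤ ((2 ^ ((2 * n ^ 3 + 3 * n - n ^ 2) ^ 2) : ℕ) : ℤ) := by exact_mod_cast h3
    _ = 2 ^ ((2 * n ^ 3 + 3 * n - n ^ 2) ^ 2) := by push_cast [Nat.cast_pow]; ring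
  · have hS : ∀ u v : ℕ, u ≤ v → v < 2 * D →
        a (x - u) ((x + v + 1) - (u + D)) = a ((x + (y - x)) - u) (((x + (y - x)) + v + 1) - (u + D)) := by
      intro u v huv hv
      have hu : u < q := by omega
      have hvq : v < q := by omega
      have hcf := congrFun hΘeq ⟨(⟨u, hu⟩, ⟨v, hvq⟩), by exact huv⟩
      simp only [hΘ] at hcf
      rw [show x + (y - x) = y from by omega]
      exact hcf
    intro i j hi hj
    exact Stmt8aux.propagate h x (y - x) (by omega) (by omega) hS i hi j hj
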